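/- (Refined main lemma) Let M₀ =β M_k via a zigzag [M₀,…,M_k] with r forward arrows and l backward arrows (r + l = k), and let m_l be the number of backward arrows among the first r arrows of the zigzag indexed so that M_r is the term reached after position r. Then M₀ ↠ M_r^(m_l*) and M_k ↠ M_r^(m_l*), where m_l ≤ min{l, r}. -/

import Mathlib

inductive Lam : Type
  | var : ℕ → Lam
  | lam : Lam → Lam
  | app : Lam → Lam → Lam
  deriving DecidableEq

namespace Lam

/-- term size -/
def size : Lam → ℕ
  | var _ => 1
  | lam M => 1 + M.size
  | app M N => 1 + M.size + N.size

/-- lift (shift) free variables ≥ d by 1 -/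
def lift (d : ℕ) : Lam → Lam
  | var n => if n < d then var n else var (n+1)
  | lam M => lam (M.lift (d+1))
  | app M N => app (M.lift d) (N.lift d)

/-- capture-avoiding substitution of N for the free variable x (de Bruijn) -/
def subst : Lam → ℕ → Lam → Lam
  | var n, x, N => if n = x then N else if x < n then var (n-1) else var n
  | lam M, x, N => lam (M.subst (x+1) (N.lift 0))
  | app M P, x, N => app (M.subst x N) (P.subst x N)

/-- number of free occurrences of the variable x -/
def count : Lam → ℕ → ℕ
  | var n, x => if n = x then 1 else 0
  | lam M, x => M.count (x+1)
  | app M N, x => M.count x + N.count x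

/-- one-step β-reduction -/
inductive Step : Lam → Lam → Prop
  | beta (M N : Lam) : Step (app (lam M) N) (M.subst 0 N)
  | appL {M M' : Lam} (N : Lam) : Step M M' → Step (app M N) (app M' N)
  | appR (M : Lam) {N N' : Lam} : Step N N' → Step (app M N) (app M N')
  | abs {M M' : Lam} : Step M M' → Step (lam M) (lam M')

/-- many-step β-reduction (reflexive-transitive closure) -/
def Red : Lam → Lam → Prop := Relation.ReflTransGen Step

/-- n-step β-reduction -/
def Steps : ℕ → Lam → Lam → Prop
  | 0, M, N => M = N
  | n+1, M, N => ∃ P, Step M P ∧ Steps n P N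

/-- Takahashi translation (Gross-Knuth complete development) -/
def star : Lam → Lam
  | var n => var n
  | lam M => lam (star M)
  | app (lam M) N => (star M).subst 0 (star N)
  | app (var n) N => app (var n) (star N)
  | app (app M₁ M₂) N => app (star (app M₁ M₂)) (star N)

/-- iterated Takahashi translation M^(n*) -/
def iterStar (n : ℕ) (M : Lam) : Lam := star^[n] M

theorem lift_lift (M : Lam) : ∀ i k, i ≤ k → lift i (lift k M) = lift (k+1) (lift i M) := by
  induction M with
  | var n =>
    intro i k h
    simp only [lift]
    split_ifs <;> simp_all [lift] <;> (try split_ifs) <;> first | rfl | omega | (congr 1; omega)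
  | lam M ih =>
    intro i k h
    simp only [lift]
    rw [ih _ _ (by omega)]
  | app M N ihM ihN =>
    intro i k h
    simp only [lift, ihM _ _ h, ihN _ _ h]

theorem lift_subst (M : Lam) : ∀ j i s, j ≤ i →
    lift i (M.subst j s) = (lift (i+1) M).subst j (lift i s) := by
  induction M with
  | var n =>
    intro j i s h
    simp only [subst, lift]
    split_ifs <;> simp_all [subst, lift] <;> (try split_ifs) <;> first | rfl | omega | (congr 1; omega)
  | lam M ih =>
    intro j i s h
    simp only [subst, lift]
    rw [ih _ _ _ (by omega), lift_lift s 0 i (by omega)]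
  | app M N ihM ihN =>
    intro j i s h
    simp only [subst, lift, ihM _ _ _ h, ihN _ _ _ h]

theorem lift_subst_lt (M : Lam) : ∀ i j s, i ≤ j →
    lift i (M.subst j s) = (lift i M).subst (j+1) (lift i s) := by
  induction M with
  | var n =>
    intro i j s h
    simp only [subst, lift]
    split_ifs <;> simp_all [subst, lift] <;> (try split_ifs) <;> first | rfl | omega | (congr 1; omega)
  | lam M ih =>
    intro i j s h
    simp only [subst, lift]
    rw [ih _ _ _ (by omega), lift_lift s 0 i (by omega)]
  | app M N ihM ihN =>
    intro i j s h
    simp only [subst, lift, ihM _ _ _ h, ihN _ _ _ h]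

theorem subst_lift (M : Lam) : ∀ k s, (lift k M).subst k s = M := by
  induction M with
  | var n => intro k s; simp only [lift]; split_ifs <;> simp only [subst] <;> (try split_ifs) <;> first | rfl | omega | (congr 1; omega)
  | lam M ih => intro k s; simp only [lift, subst, ih]
  | app M N ihM ihN => intro k s; simp only [lift, subst, ihM, ihN]

theorem subst_subst (M : Lam) : ∀ i j u v, i ≤ j →
    (M.subst (j+1) (lift i v)).subst i (u.subst j v) = (M.subst i u).subst j v := by
  induction M with
  | var n =>
    intro i j u v h
    simp only [subst]
    split_ifs <;> simp_all [subst, subst_lift] <;> (try split_ifs) <;>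
      first | rfl | omega | (congr 1; omega)
  | lam M ih =>
    intro i j u v h
    simp only [subst]
    rw [lift_lift v 0 i (Nat.zero_le _), lift_subst_lt u 0 j v (Nat.zero_le _)]
    exact congrArg Lam.lam (ih (i+1) (j+1) _ _ (by omega))
  | app M N ihM ihN =>
    intro i j u v h
    simp only [subst, ihM _ _ _ _ h, ihN _ _ _ _ h]


inductive Par : Lam → Lam → Prop
  | var (n : ℕ) : Par (var n) (var n)
  | lam {M M'} : Par M M' → Par (lam M) (lam M')
  | app {M M' N N'} : Par M M' → Par N N' → Par (app M N) (app M' N')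
  | beta {M M' N N'} : Par M M' → Par N N' → Par (app (lam M) N) (M'.subst 0 N')

theorem par_refl (M : Lam) : Par M M := by
  induction M with
  | var n => exact Par.var n
  | lam M ih => exact Par.lam ih
  | app M N ihM ihN => exact Par.app ihM ihN

theorem step_par {M N : Lam} (h : Step M N) : Par M N := by
  induction h with
  | beta M N => exact Par.beta (par_refl M) (par_refl N)
  | appL N _ ih => exact Par.app ih (par_refl N)
  | appR M _ ih => exact Par.app (par_refl M) ih
  | abs _ ih => exact Par.lam ih

theorem red_appL {M M' : Lam} (N : Lam) (h : Red M M') : Red (app M N) (app M' N) := by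
  induction h with
  | refl => exact Relation.ReflTransGen.refl
  | tail _ h2 ih => exact ih.tail (Step.appL N h2)

theorem red_appR (M : Lam) {N N' : Lam} (h : Red N N') : Red (app M N) (app M N') := by
  induction h with
  | refl => exact Relation.ReflTransGen.refl
  | tail _ h2 ih => exact ih.tail (Step.appR M h2)

theorem red_abs {M M' : Lam} (h : Red M M') : Red (lam M) (lam M') := by
  induction h with
  | refl => exact Relation.ReflTransGen.refl
  | tail _ h2 ih => exact ih.tail (Step.abs h2)

theorem par_red {M N : Lam} (h : Par M N) : Red M N := by
  induction h with
  | var n => exact Relation.ReflTransGen.refl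
  | lam _ ih => exact red_abs ih
  | app _ _ ih1 ih2 => exact (red_appL _ ih1).trans (red_appR _ ih2)
  | beta _ _ ih1 ih2 =>
    exact ((red_appL _ (red_abs ih1)).trans (red_appR _ ih2)).tail (Step.beta _ _)

theorem lift_par {M M' : Lam} (h : Par M M') : ∀ d, Par (lift d M) (lift d M') := by
  induction h with
  | var n => intro d; simp only [lift]; split_ifs <;> exact par_refl _
  | lam _ ih => intro d; exact Par.lam (ih (d+1))
  | app _ _ ih1 ih2 => intro d; exact Par.app (ih1 d) (ih2 d)
  | beta _ _ ih1 ih2 =>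
    intro d
    rw [lift, lift_subst _ 0 d _ (Nat.zero_le d)]
    exact Par.beta (ih1 (d+1)) (ih2 d)

theorem subst_par {M M' : Lam} (h : Par M M') :
    ∀ {N N' : Lam} (x : ℕ), Par N N' → Par (M.subst x N) (M'.subst x N') := by
  induction h with
  | var n =>
    intro N N' x hN
    simp only [subst]; split_ifs <;> first | exact hN | exact par_refl _
  | lam _ ih => intro N N' x hN; exact Par.lam (ih (x+1) (lift_par hN 0))
  | app _ _ ih1 ih2 => intro N N' x hN; exact Par.app (ih1 x hN) (ih2 x hN)
  | beta _ _ ih1 ih2 =>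
    intro N N' x hN
    have := Par.beta (ih1 (x+1) (lift_par hN 0)) (ih2 x hN)
    simpa only [subst, subst_subst _ 0 x _ _ (Nat.zero_le x)] using this

theorem triangle {M N : Lam} (h : Par M N) : Par N (star M) := by
  induction h with
  | var n => exact Par.var n
  | lam _ ih => exact Par.lam ih
  | beta _ _ ih1 ih2 => exact subst_par ih1 0 ih2
  | @app M M' N N' hM hN ihM ihN =>
    cases M with
    | var n => exact Par.app ihM ihN
    | app P Q => exact Par.app ihM ihN
    | lam P =>
      cases hM with
      | lam hP =>
        cases ihM with
        | lam ihP => exact Par.beta ihP ihN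

theorem red_star (M : Lam) : Red M (star M) := par_red (triangle (par_refl M))

theorem step_red_star {M N : Lam} (h : Step M N) : Red N (star M) :=
  par_red (triangle (step_par h))

theorem red_star_mono {M N : Lam} (h : Red M N) : Red (star M) (star N) := by
  induction h with
  | refl => exact Relation.ReflTransGen.refl
  | tail _ h2 ih => exact ih.trans (par_red (triangle (triangle (step_par h2))))

theorem red_iterStar_mono (n : ℕ) {M N : Lam} (h : Red M N) :
    Red (iterStar n M) (iterStar n N) := by
  induction n with
  | zero => exact h
  | succ n ih =>
    simp only [iterStar, Function.iterate_succ_apply'] at *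
    exact red_star_mono ih

theorem iterStar_star (n : ℕ) (M : Lam) : iterStar n (star M) = iterStar (n+1) M := by
  simp [iterStar, Function.iterate_succ_apply]


theorem zigzag_lemma (k : ℕ) (Ms : ℕ → Lam) (d : ℕ → Bool)
    (hzig : ∀ i < k, if d i then Step (Ms i) (Ms (i+1)) else Step (Ms (i+1)) (Ms i)) :
    Red (Ms 0)
      (iterStar ((Finset.range k).filter (fun i => d i = false)).card (Ms k)) := by
  induction k with
  | zero => simp only [Finset.range_zero, Finset.filter_empty, Finset.card_empty, iterStar,
      Function.iterate_zero, id]; exact Relation.ReflTransGen.refl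
  | succ k ih =>
    have hk := hzig k (Nat.lt_succ_self k)
    have ih' := ih (fun i hi => hzig i (Nat.lt_succ_of_lt hi))
    rw [Finset.range_add_one, Finset.filter_insert]
    by_cases hd : d k = false
    · rw [if_pos hd, Finset.card_insert_of_notMem (by simp)]
      rw [hd] at hk
      simp only [Bool.false_eq_true, if_false] at hk
      refine ih'.trans ?_
      have := red_iterStar_mono ((Finset.range k).filter (fun i => d i = false)).card
        (step_red_star hk)
      rwa [iterStar_star] at this
    · rw [if_neg hd]
      simp only [Bool.not_eq_false] at hd
      rw [hd, if_pos rfl] at hk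
      exact ih'.trans (red_iterStar_mono _ (Relation.ReflTransGen.single hk))

end Lam

/-- refined main lemma. A zigzag of length k is given by its terms
`Ms 0, …, Ms k` and arrow directions `d i` (`true` = forward `Ms i → Ms (i+1)`,
`false` = backward `Ms (i+1) → Ms i`). With r forward arrows, l backward arrows
and m_l backward arrows among the first r arrows, both ends reduce to
(Ms r)^(m_l*), and m_l ≤ min l r. -/
theorem refined_main_lemma (k : ℕ) (Ms : ℕ → Lam) (d : ℕ → Bool)
    (hzig : ∀ i < k, if d i then Lam.Step (Ms i) (Ms (i+1))
                     else Lam.Step (Ms (i+1)) (Ms i)) :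
    ∀ r l ml : ℕ,
      r = ((Finset.range k).filter (fun i => d i = true)).card →
      l = ((Finset.range k).filter (fun i => d i = false)).card →
      ml = ((Finset.range r).filter (fun i => d i = false)).card →
      Lam.Red (Ms 0) (Lam.iterStar ml (Ms r)) ∧
        Lam.Red (Ms k) (Lam.iterStar ml (Ms r)) ∧
        ml ≤ min l r := by
  intro r l ml hr hl hml
  have hrk : r ≤ k := by
    rw [hr]
    exact (Finset.card_filter_le _ _).trans (by simp)
  -- first part
  have h1 : Lam.Red (Ms 0) (Lam.iterStar ml (Ms r)) := by
    rw [hml]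
    exact Lam.zigzag_lemma r Ms d (fun i hi => hzig i (lt_of_lt_of_le hi hrk))
  -- reversed zigzag
  have h2 : Lam.Red (Ms k)
      (Lam.iterStar (((Finset.range (k-r)).filter
        (fun i => (!d (k-i-1)) = false)).card) (Ms r)) := by
    have := Lam.zigzag_lemma (k-r) (fun i => Ms (k-i)) (fun i => !d (k-i-1))
      (fun i hi => by
        have hj := hzig (k-i-1) (by omega)
        have e1 : k-i-1+1 = k-i := by omega
        have e2 : k-(i+1) = k-i-1 := by omega
        rcases Bool.eq_false_or_eq_true (d (k-i-1)) with hb | hb <;>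
          simp only [hb, Bool.not_false, Bool.not_true, if_true, if_false,
            Bool.false_eq_true, Bool.true_eq_false, e1, e2] at hj ⊢ <;> exact hj)
    simp only [Nat.sub_zero, Nat.sub_sub_self hrk] at this
    exact this
  -- cardinality bookkeeping
  have hcard : ((Finset.range (k-r)).filter (fun i => (!d (k-i-1)) = false)).card
      = ml := by
    have e0 : ((Finset.range (k-r)).filter (fun i => (!d (k-i-1)) = false)).card
        = ((Finset.range (k-r)).filter (fun i => d (k-i-1) = true)).card := by
      congr 1
      apply Finset.filter_congr
      intro i _
      simp
    rw [e0]
    have eA : ((Finset.range (k-r)).filter (fun i => d (k-i-1) = true)).card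
        = ((Finset.Ico r k).filter (fun j => d j = true)).card := by
      apply Finset.card_bij' (fun i _ => k-i-1) (fun j _ => k-j-1)
      · intro i hi
        simp only [Finset.mem_filter, Finset.mem_range] at hi
        simp only [Finset.mem_filter, Finset.mem_Ico]
        exact ⟨⟨by omega, by omega⟩, hi.2⟩
      · intro j hj
        simp only [Finset.mem_filter, Finset.mem_Ico] at hj
        simp only [Finset.mem_filter, Finset.mem_range]
        constructor
        · omega
        · have : k-(k-j-1)-1 = j := by omega
          rw [this]; exact hj.2
      · intro i hi
        simp only [Finset.mem_filter, Finset.mem_range] at hi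
        omega
      · intro j hj
        simp only [Finset.mem_filter, Finset.mem_Ico] at hj
        omega
    rw [eA]
    have hsplit : ((Finset.range k).filter (fun i => d i = true)).card
        = ((Finset.range r).filter (fun i => d i = true)).card
          + ((Finset.Ico r k).filter (fun i => d i = true)).card := by
      rw [Finset.range_eq_Ico, Finset.range_eq_Ico,
        ← Finset.Ico_union_Ico_eq_Ico (Nat.zero_le r) hrk,
        Finset.filter_union, Finset.card_union_of_disjoint]
      exact Finset.disjoint_filter_filter (p := fun i => d i = true) (q := fun i => d i = true)
        (Finset.Ico_disjoint_Ico_consecutive 0 r k)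
    have hpm : ((Finset.range r).filter (fun i => d i = true)).card
        + ((Finset.range r).filter (fun i => d i = false)).card = r := by
      have key := Finset.card_filter_add_card_filter_not
        (s := Finset.range r) (p := fun i => d i = true)
      simp only [Finset.card_range] at key
      have e : Finset.filter (fun a => ¬ d a = true) (Finset.range r)
          = Finset.filter (fun i => d i = false) (Finset.range r) := by
        apply Finset.filter_congr
        intro i _
        simp
      rw [e] at key
      exact key
    omega
  rw [hcard] at h2
  refine ⟨h1, h2, ?_⟩
  have hml_r : ml ≤ r := by
    rw [hml]; exact (Finset.card_filter_le _ _).trans (by simp)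
  have hml_l : ml ≤ l := by
    rw [hml, hl]
    exact Finset.card_le_card
      (Finset.filter_subset_filter _ (Finset.range_subset_range.2 hrk))
  exact le_min hml_l hml_r
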